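/- Let G be a (d±d')-nearly regular n-vertex graph with d' ≤ d/100 in which, for any vertex w and any t, the simple random walk of length t ≥ t₀ from any vertex hits w at time t with probability in [d(w)/(2e(G)) − n^{-10}, d(w)/(2e(G)) + n^{-10}] (i.e., G is mixing in time t₀). Let ℓ ≥ 2t₀, and let a, b be vertices. Then for any t with 1 ≤ t ≤ ℓ/2 and any vertex v, the probability that the random walk of length ℓ from a, conditioned to end at b, is at v at time t is at most 2/(d − d') + n^{-6} ≤ 3/d. -/

import Mathlib

noncomputable section

/-- The probability that the simple random walk (moving to a uniformly random neighbour
at each step) started at `a` follows exactly the walk `w`. -/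
def walkProb {V : Type*} [Fintype V] (G : SimpleGraph V) [DecidableRel G.Adj] :
    ∀ {a b : V}, G.Walk a b → ℝ
  | _, _, SimpleGraph.Walk.nil => 1
  | a, _, SimpleGraph.Walk.cons _ p => ((G.degree a : ℝ))⁻¹ * walkProb G p

namespace Stmt16

open Finset SimpleGraph SimpleGraph.Walk

variable {V : Type*} [Fintype V] [DecidableEq V] (G : SimpleGraph V) [DecidableRel G.Adj]

lemma walkProb_nonneg : ∀ {a b : V} (p : G.Walk a b), 0 ≤ walkProb G p
  | _, _, .nil => zero_le_one
  | _, _, .cons _ p =>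
      mul_nonneg (inv_nonneg.2 (Nat.cast_nonneg _)) (walkProb_nonneg p)

/-- total walk probability -/
def P (n : ℕ) (u v : V) : ℝ := ∑ p ∈ G.finsetWalkLength n u v, walkProb G p

lemma P_nonneg (n : ℕ) (u v : V) : 0 ≤ P G n u v :=
  Finset.sum_nonneg fun p _ => walkProb_nonneg G p

lemma finsetWalkLength_zero_self (u : V) :
    G.finsetWalkLength 0 u u = {Walk.nil} := by
  ext p
  simp [mem_finsetWalkLength_iff, Walk.length_eq_zero_iff]

lemma finsetWalkLength_zero_ne {u v : V} (h : u ≠ v) :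
    G.finsetWalkLength 0 u v = ∅ := by
  apply Finset.eq_empty_of_forall_notMem
  intro p hp
  rw [mem_finsetWalkLength_iff] at hp
  exact h (Walk.eq_of_length_eq_zero hp)

lemma P_zero (u v : V) : P G 0 u v = if u = v then 1 else 0 := by
  by_cases h : u = v
  · subst h
    simp [P, finsetWalkLength_zero_self, walkProb]
  · simp [P, finsetWalkLength_zero_ne G h, h]

/-- decomposition of the sum over walks of length `n+1` along the first step -/
lemma sum_walkLength_succ (n : ℕ) (u v : V) (f : G.Walk u v → ℝ) :
    ∑ p ∈ G.finsetWalkLength (n + 1) u v, f p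
      = ∑ w : G.neighborSet u, ∑ p ∈ G.finsetWalkLength n w v, f (Walk.cons w.2 p) := by
  have hdef : G.finsetWalkLength (n + 1) u v
      = Finset.univ.biUnion fun (w : G.neighborSet u) =>
          (G.finsetWalkLength n w v).map
            ⟨fun p => Walk.cons w.property p, fun _ _ => by intro h; cases h; rfl⟩ := rfl
  rw [hdef, Finset.sum_biUnion]
  · refine Finset.sum_congr rfl fun w _ => ?_
    rw [Finset.sum_map]
    rfl
  · intro x _ y _ hxy
    simp only [Finset.disjoint_left]
    intro p hpx hpy
    simp only [Finset.mem_map, Function.Embedding.coeFn_mk] at hpx hpy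
    obtain ⟨px, _, rfl⟩ := hpx
    obtain ⟨py, _, hpy⟩ := hpy
    apply hxy
    have h1 : (Walk.cons x.2 px).getVert 1 = (x : V) := by
      exact (Walk.getVert_cons_succ px _).trans (Walk.getVert_zero px)
    have h2 : (Walk.cons y.2 py).getVert 1 = (y : V) := by
      exact (Walk.getVert_cons_succ py _).trans (Walk.getVert_zero py)
    replace h2 := (congrArg (fun q : G.Walk u v => q.getVert 1) hpy).symm.trans h2
    exact Subtype.ext (h1.symm.trans h2)

lemma walkProb_cons {u v w : V} (h : G.Adj u v) (p : G.Walk v w) :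
    walkProb G (Walk.cons h p) = ((G.degree u : ℝ))⁻¹ * walkProb G p := rfl

lemma P_succ (n : ℕ) (u v : V) :
    P G (n + 1) u v = ∑ w : G.neighborSet u, ((G.degree u : ℝ))⁻¹ * P G n w v := by
  rw [P, sum_walkLength_succ]
  refine Finset.sum_congr rfl fun w _ => ?_
  rw [P, Finset.mul_sum]
  exact Finset.sum_congr rfl fun p _ => walkProb_cons G w.2 p

lemma sum_neighbor (u : V) (f : V → ℝ) :
    ∑ x : G.neighborSet u, f x = ∑ x ∈ G.neighborFinset u, f x := by
  rw [neighborFinset_def]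
  exact Finset.sum_set_coe (s := G.neighborSet u)

lemma P_sum_one (hdeg : ∀ x : V, 0 < G.degree x) (n : ℕ) (u : V) :
    ∑ v : V, P G n u v = 1 := by
  induction n generalizing u with
  | zero => simp [P_zero]
  | succ n ih =>
    have hdu : ((G.degree u : ℝ)) ≠ 0 := by
      exact_mod_cast (hdeg u).ne'
    simp only [P_succ]
    rw [Finset.sum_comm]
    have h1 : ∀ w : G.neighborSet u,
        ∑ v : V, ((G.degree u : ℝ))⁻¹ * P G n w v = ((G.degree u : ℝ))⁻¹ := by
      intro w
      rw [← Finset.mul_sum, ih, mul_one]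
    rw [Finset.sum_congr rfl fun w _ => h1 w, Finset.sum_const, Finset.card_univ,
      card_neighborSet_eq_degree, nsmul_eq_mul, mul_inv_cancel₀ hdu]

lemma walkProb_nil (u : V) : walkProb G (Walk.nil : G.Walk u u) = 1 := rfl

lemma walkProb_append : ∀ {u v w : V} (p : G.Walk u v) (q : G.Walk v w),
    walkProb G (p.append q) = walkProb G p * walkProb G q
  | _, _, _, .nil, q => by simp [walkProb_nil, Walk.nil_append]
  | _, _, _, .cons h p, q => by
      rw [Walk.cons_append, walkProb_cons, walkProb_cons, walkProb_append p q, mul_assoc]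

lemma walkProb_reverse {u v : V} (p : G.Walk u v) :
    (G.degree u : ℝ) * walkProb G p = (G.degree v : ℝ) * walkProb G p.reverse := by
  induction p with
  | nil => simp
  | @cons u x v h q ih =>
    have hdu : ((G.degree u : ℝ)) ≠ 0 := by
      have : 0 < G.degree u := (degree_pos_iff_exists_adj G u).2 ⟨x, h⟩
      exact_mod_cast this.ne'
    have hdx : ((G.degree x : ℝ)) ≠ 0 := by
      have : 0 < G.degree x := (degree_pos_iff_exists_adj G x).2 ⟨u, h.symm⟩
      exact_mod_cast this.ne'
    rw [Walk.reverse_cons, walkProb_append, walkProb_cons, walkProb_cons, walkProb_nil]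
    calc (G.degree u : ℝ) * (((G.degree u : ℝ))⁻¹ * walkProb G q) = walkProb G q := by
          field_simp
      _ = ((G.degree x : ℝ) * walkProb G q) * ((G.degree x : ℝ))⁻¹ := by field_simp
      _ = ((G.degree v : ℝ) * walkProb G q.reverse) * ((G.degree x : ℝ))⁻¹ := by rw [ih]
      _ = (G.degree v : ℝ) * (walkProb G q.reverse * (((G.degree x : ℝ))⁻¹ * 1)) := by ring

lemma P_reverse (n : ℕ) (u v : V) :
    (G.degree u : ℝ) * P G n u v = (G.degree v : ℝ) * P G n v u := by
  unfold P
  rw [Finset.mul_sum, Finset.mul_sum]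
  rw [Finset.sum_congr rfl fun p _ => walkProb_reverse G p]
  refine Finset.sum_bij' (fun p _ => p.reverse) (fun q _ => q.reverse) ?_ ?_ ?_ ?_ ?_
  · intro p hp
    rw [mem_finsetWalkLength_iff] at hp ⊢
    rw [Walk.length_reverse, hp]
  · intro q hq
    rw [mem_finsetWalkLength_iff] at hq ⊢
    rw [Walk.length_reverse, hq]
  · intro p _
    exact Walk.reverse_reverse p
  · intro q _
    exact Walk.reverse_reverse q
  · intro p _
    rfl

lemma P_add (m n : ℕ) (u w : V) :
    P G (m + n) u w = ∑ x : V, P G m u x * P G n x w := by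
  induction m generalizing u with
  | zero =>
    have h0 : ∀ x : V, P G 0 u x * P G n x w = if u = x then P G n x w else 0 := by
      intro x
      rw [P_zero]
      split <;> simp
    rw [Nat.zero_add, Finset.sum_congr rfl fun x _ => h0 x, Finset.sum_ite_eq]
    simp
  | succ m ih =>
    rw [show m + 1 + n = (m + n) + 1 from by omega, P_succ]
    simp only [ih, Finset.mul_sum]
    rw [Finset.sum_comm]
    refine Finset.sum_congr rfl fun x _ => ?_
    rw [P_succ, Finset.sum_mul]
    exact Finset.sum_congr rfl fun y _ => by ring

lemma P_le (hdeg : ∀ x : V, 0 < G.degree x) {δ : ℝ} (hδ : 0 < δ)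
    (hδle : ∀ x : V, δ ≤ (G.degree x : ℝ)) (s : ℕ) (u v : V) :
    P G (s + 1) u v ≤ δ⁻¹ := by
  have hdu : ((G.degree u : ℝ)) ≠ 0 := by exact_mod_cast (hdeg u).ne'
  have hdv : ((G.degree v : ℝ)) ≠ 0 := by exact_mod_cast (hdeg v).ne'
  have key : P G (s + 1) u v = ∑ x : G.neighborSet v, ((G.degree (x : V) : ℝ))⁻¹ * P G s u x := by
    have h1 : (G.degree v : ℝ) * P G (s + 1) v u = (G.degree u : ℝ) * P G (s + 1) u v :=
      P_reverse G (s + 1) v u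
    rw [P_succ, Finset.mul_sum] at h1
    have h2 : ∀ x : G.neighborSet v,
        (G.degree v : ℝ) * (((G.degree v : ℝ))⁻¹ * P G s (x : V) u)
          = ((G.degree (x : V) : ℝ))⁻¹ * ((G.degree u : ℝ) * P G s u x) := by
      intro x
      have hdx : ((G.degree (x : V) : ℝ)) ≠ 0 := by exact_mod_cast (hdeg x).ne'
      have := P_reverse G s (x : V) u
      calc (G.degree v : ℝ) * (((G.degree v : ℝ))⁻¹ * P G s (x : V) u)
          = P G s (x : V) u := by field_simp
        _ = ((G.degree (x : V) : ℝ))⁻¹ * ((G.degree (x : V) : ℝ) * P G s (x : V) u) := by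
            field_simp
        _ = ((G.degree (x : V) : ℝ))⁻¹ * ((G.degree u : ℝ) * P G s u x) := by rw [this]
    rw [Finset.sum_congr rfl fun x _ => h2 x] at h1
    have h3 : (G.degree u : ℝ) * P G (s + 1) u v
        = (G.degree u : ℝ) * ∑ x : G.neighborSet v, ((G.degree (x : V) : ℝ))⁻¹ * P G s u x := by
      rw [← h1, Finset.mul_sum]
      exact Finset.sum_congr rfl fun x _ => by ring
    exact mul_left_cancel₀ hdu h3
  rw [key]
  have step1 : ∑ x : G.neighborSet v, ((G.degree (x : V) : ℝ))⁻¹ * P G s u x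
      ≤ ∑ x : G.neighborSet v, δ⁻¹ * P G s u x := by
    refine Finset.sum_le_sum fun x _ => ?_
    exact mul_le_mul_of_nonneg_right
      (inv_anti₀ hδ (hδle x)) (P_nonneg G s u x)
  refine step1.trans ?_
  rw [← Finset.mul_sum, sum_neighbor]
  have step2 : ∑ x ∈ G.neighborFinset v, P G s u x ≤ ∑ x : V, P G s u x :=
    Finset.sum_le_sum_of_subset_of_nonneg (Finset.subset_univ _)
      (fun x _ _ => P_nonneg G s u x)
  calc δ⁻¹ * ∑ x ∈ G.neighborFinset v, P G s u x
      ≤ δ⁻¹ * ∑ x : V, P G s u x :=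
        mul_le_mul_of_nonneg_left step2 (inv_nonneg.2 hδ.le)
    _ = δ⁻¹ := by rw [P_sum_one G hdeg, mul_one]

lemma P_split (v : V) : ∀ (t ℓ : ℕ), t ≤ ℓ → ∀ (u w : V),
    ∑ p ∈ (G.finsetWalkLength ℓ u w).filter (fun p => p.getVert t = v), walkProb G p
      = P G t u v * P G (ℓ - t) v w := by
  intro t
  induction t with
  | zero =>
    intro ℓ _ u w
    rw [Finset.sum_filter]
    simp only [Walk.getVert_zero]
    by_cases h : u = v
    · subst h
      simp only [if_pos rfl]
      rw [P_zero, if_pos rfl, one_mul, Nat.sub_zero]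
      rfl
    · simp [h, P_zero]
  | succ t ih =>
    intro ℓ hle u w
    obtain ⟨m, rfl⟩ : ∃ m, ℓ = m + 1 := ⟨ℓ - 1, by omega⟩
    rw [Finset.sum_filter, sum_walkLength_succ]
    have key : ∀ (x : G.neighborSet u) (p : G.Walk (x : V) w),
        (if (Walk.cons x.2 p).getVert (t + 1) = v then walkProb G (Walk.cons x.2 p) else 0)
          = ((G.degree u : ℝ))⁻¹ * (if p.getVert t = v then walkProb G p else 0) := by
      intro x p
      show (if p.getVert t = v then ((G.degree u : ℝ))⁻¹ * walkProb G p else 0) = _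
      split <;> simp
    have h2 : ∀ x : G.neighborSet u,
        ∑ p ∈ G.finsetWalkLength m (x : V) w,
            (if (Walk.cons x.2 p).getVert (t + 1) = v then walkProb G (Walk.cons x.2 p) else 0)
          = ((G.degree u : ℝ))⁻¹ * (P G t (x : V) v * P G (m - t) v w) := by
      intro x
      rw [Finset.sum_congr rfl fun p _ => key x p, ← Finset.mul_sum, ← Finset.sum_filter,
        ih m (by omega) (x : V) w]
    rw [Finset.sum_congr rfl fun x _ => h2 x,
      show m + 1 - (t + 1) = m - t from by omega, P_succ, Finset.sum_mul]
    exact Finset.sum_congr rfl fun x _ => by ring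

end Stmt16

theorem statement16 {V : Type*} [Fintype V] [DecidableEq V]
    (G : SimpleGraph V) [DecidableRel G.Adj]
    (d d' : ℝ) (hd' : d' ≤ d / 100)
    (hreg : ∀ v : V, d - d' ≤ (G.degree v : ℝ) ∧ (G.degree v : ℝ) ≤ d + d')
    (t₀ ℓ : ℕ) (hℓ : 2 * t₀ ≤ ℓ)
    (hmix : ∀ (u w : V) (t : ℕ), t₀ ≤ t →
      |(∑ p ∈ G.finsetWalkLength t u w, walkProb G p)
          - (G.degree w : ℝ) / (2 * (G.edgeFinset.card : ℝ))|
        ≤ ((Fintype.card V : ℝ) ^ 10)⁻¹)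
    (a b : V) (t : ℕ) (ht1 : 1 ≤ t) (ht2 : 2 * t ≤ ℓ) (v : V) :
    (∑ p ∈ (G.finsetWalkLength ℓ a b).filter (fun p => p.getVert t = v), walkProb G p) /
        (∑ p ∈ G.finsetWalkLength ℓ a b, walkProb G p)
      ≤ 2 / (d - d') + ((Fintype.card V : ℝ) ^ 6)⁻¹ ∧
    (∑ p ∈ (G.finsetWalkLength ℓ a b).filter (fun p => p.getVert t = v), walkProb G p) /
        (∑ p ∈ G.finsetWalkLength ℓ a b, walkProb G p)
      ≤ 3 / d := by
  classical
  have hda1 := (hreg a).1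
  have hda2 := (hreg a).2
  have hdeg_nonneg : (0 : ℝ) ≤ (G.degree a : ℝ) := Nat.cast_nonneg _
  have hd0 : 0 ≤ d := by linarith
  have hnum : (∑ p ∈ (G.finsetWalkLength ℓ a b).filter (fun p => p.getVert t = v),
      walkProb G p) = Stmt16.P G t a v * Stmt16.P G (ℓ - t) v b :=
    Stmt16.P_split G v t ℓ (by omega) a b
  have hden : (∑ p ∈ G.finsetWalkLength ℓ a b, walkProb G p)
      = ∑ x : V, Stmt16.P G t a x * Stmt16.P G (ℓ - t) x b := by
    have h := Stmt16.P_add G t (ℓ - t) a b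
    rw [show t + (ℓ - t) = ℓ from by omega] at h
    exact h
  by_cases hd : d ≤ 0
  · -- degenerate case : d = 0, graph has no edges
    have hd' : d = 0 := le_antisymm hd hd0
    have hdeg0 : ∀ x : V, G.degree x = 0 := by
      intro x
      have h1 := (hreg x).2
      have h2 : (0 : ℝ) ≤ (G.degree x : ℝ) := Nat.cast_nonneg _
      have : (G.degree x : ℝ) = 0 := by linarith
      exact_mod_cast this
    have hempty : G.finsetWalkLength ℓ a b = ∅ := by
      apply Finset.eq_empty_of_forall_notMem
      intro p hp
      rw [SimpleGraph.mem_finsetWalkLength_iff] at hp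
      cases p with
      | nil => simp at hp; omega
      | cons h q =>
        have : 0 < G.degree a := (SimpleGraph.degree_pos_iff_exists_adj G a).2 ⟨_, h⟩
        rw [hdeg0 a] at this
        omega
    rw [hempty]
    simp only [Finset.filter_empty, Finset.sum_empty, zero_div]
    constructor
    · have h1 : (0 : ℝ) ≤ 2 / (d - d') := div_nonneg (by norm_num) (by linarith)
      have h2 : (0 : ℝ) ≤ ((Fintype.card V : ℝ) ^ 6)⁻¹ := by positivity
      linarith
    · exact div_nonneg (by norm_num) hd0
  push_neg at hd
  -- main case : d > 0
  set δ : ℝ := d - d' with hδdef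
  have hδd : (99 / 100) * d ≤ δ := by rw [hδdef]; linarith
  have hδ : 0 < δ := by linarith
  have hdegδ : ∀ x : V, δ ≤ (G.degree x : ℝ) := fun x => (hreg x).1
  have hdegpos : ∀ x : V, 0 < G.degree x := by
    intro x
    have : (0 : ℝ) < (G.degree x : ℝ) := lt_of_lt_of_le hδ (hdegδ x)
    exact_mod_cast this
  obtain ⟨w, hw⟩ := (SimpleGraph.degree_pos_iff_exists_adj G a).1 (hdegpos a)
  set N : ℝ := (Fintype.card V : ℝ) with hNdef
  have hN2 : (2 : ℝ) ≤ N := by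
    rw [hNdef]
    exact_mod_cast Fintype.one_lt_card_iff.2 ⟨a, w, hw.ne⟩
  have hN0 : (0 : ℝ) < N := by linarith
  set E2 : ℝ := 2 * (G.edgeFinset.card : ℝ) with hE2def
  have hsum_deg : (∑ x : V, (G.degree x : ℝ)) = E2 := by
    rw [hE2def]
    exact_mod_cast G.sum_degrees_eq_twice_card_edges
  have hE2pos : (0 : ℝ) < E2 := by
    rw [← hsum_deg]
    have h1 : (G.degree a : ℝ) ≤ ∑ x : V, (G.degree x : ℝ) :=
      Finset.single_le_sum (f := fun x : V => (G.degree x : ℝ))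
        (fun x _ => Nat.cast_nonneg _) (Finset.mem_univ a)
    linarith [lt_of_lt_of_le hδ (hdegδ a)]
  have hE2le : E2 ≤ N * (d + d') := by
    rw [← hsum_deg, hNdef]
    calc ∑ x : V, (G.degree x : ℝ) ≤ ∑ _x : V, (d + d') :=
          Finset.sum_le_sum fun x _ => (hreg x).2
      _ = (Fintype.card V : ℝ) * (d + d') := by
          rw [Finset.sum_const, Finset.card_univ, nsmul_eq_mul]
  have hdd'pos : 0 < d + d' := lt_of_lt_of_le (lt_of_lt_of_le hδ (hdegδ a)) (by linarith)
  set pb : ℝ := (G.degree b : ℝ) / E2 with hpbdef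
  set e : ℝ := (N ^ 10)⁻¹ with hedef
  have he0 : 0 < e := by rw [hedef]; positivity
  -- pb ≥ 3 e
  have h3e : 3 * e ≤ pb := by
    have hstep1 : δ / (N * (d + d')) ≤ pb := by
      rw [hpbdef]
      apply div_le_div₀ (Nat.cast_nonneg _) (hdegδ b) hE2pos hE2le
    refine le_trans ?_ hstep1
    rw [hedef, show (3 : ℝ) * (N ^ 10)⁻¹ = 3 / N ^ 10 from by ring,
      div_le_div_iff₀ (by positivity) (by positivity)]
    have hN9 : (512 : ℝ) ≤ N ^ 9 := by
      calc (512 : ℝ) = 2 ^ 9 := by norm_num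
        _ ≤ N ^ 9 := pow_le_pow_left₀ (by norm_num) hN2 9
    have hpow : N ^ 10 = N * N ^ 9 := by ring
    have hdd'le : d + d' ≤ (101 / 100) * d := by linarith
    calc 3 * (N * (d + d')) ≤ 3 * (N * ((101 / 100) * d)) := by
          have : N * (d + d') ≤ N * ((101 / 100) * d) :=
            mul_le_mul_of_nonneg_left hdd'le hN0.le
          linarith
      _ ≤ ((99 / 100) * d) * (N * 512) := by nlinarith [mul_nonneg hN0.le hd.le]
      _ ≤ δ * (N * N ^ 9) := by
          have h1 : N * 512 ≤ N * N ^ 9 := mul_le_mul_of_nonneg_left hN9 hN0.le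
          have h2 : (0 : ℝ) ≤ N * 512 := by positivity
          exact mul_le_mul hδd h1 h2 hδ.le
      _ = δ * N ^ 10 := by rw [hpow]
  -- mixing bounds
  have hmix' : ∀ x : V, pb - e ≤ Stmt16.P G (ℓ - t) x b ∧ Stmt16.P G (ℓ - t) x b ≤ pb + e := by
    intro x
    have h := hmix x b (ℓ - t) (by omega)
    rw [abs_le] at h
    have hPdef : Stmt16.P G (ℓ - t) x b
        = ∑ p ∈ G.finsetWalkLength (ℓ - t) x b, walkProb G p := rfl
    rw [hPdef, hpbdef]
    constructor
    · linarith [h.1]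
    · linarith [h.2]
  -- denominator lower bound
  have hDlb : pb - e ≤ ∑ x : V, Stmt16.P G t a x * Stmt16.P G (ℓ - t) x b := by
    have h1 : ∑ x : V, Stmt16.P G t a x * (pb - e)
        ≤ ∑ x : V, Stmt16.P G t a x * Stmt16.P G (ℓ - t) x b :=
      Finset.sum_le_sum fun x _ =>
        mul_le_mul_of_nonneg_left (hmix' x).1 (Stmt16.P_nonneg G t a x)
    rw [← Finset.sum_mul, Stmt16.P_sum_one G hdegpos t a, one_mul] at h1
    exact h1
  -- numerator upper bound
  have hNub : Stmt16.P G t a v * Stmt16.P G (ℓ - t) v b ≤ δ⁻¹ * (pb + e) := by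
    obtain ⟨s, rfl⟩ : ∃ s, t = s + 1 := ⟨t - 1, by omega⟩
    exact mul_le_mul (Stmt16.P_le G hdegpos hδ hdegδ s a v) (hmix' v).2
      (Stmt16.P_nonneg G _ v b) (by positivity)
  -- combine
  have hDpos : 0 < ∑ x : V, Stmt16.P G t a x * Stmt16.P G (ℓ - t) x b := by
    have : 2 * e ≤ pb - e := by linarith
    linarith
  have hmain : (∑ p ∈ (G.finsetWalkLength ℓ a b).filter (fun p => p.getVert t = v),
      walkProb G p) / (∑ p ∈ G.finsetWalkLength ℓ a b, walkProb G p) ≤ 2 / δ := by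
    rw [hnum, hden, div_le_div_iff₀ hDpos hδ]
    have h1 : (Stmt16.P G t a v * Stmt16.P G (ℓ - t) v b) * δ ≤ pb + e := by
      calc (Stmt16.P G t a v * Stmt16.P G (ℓ - t) v b) * δ ≤ (δ⁻¹ * (pb + e)) * δ :=
            mul_le_mul_of_nonneg_right hNub hδ.le
        _ = pb + e := by field_simp
    have h2 : pb + e ≤ 2 * (pb - e) := by linarith
    calc (Stmt16.P G t a v * Stmt16.P G (ℓ - t) v b) * δ ≤ pb + e := h1
      _ ≤ 2 * (pb - e) := h2
      _ ≤ 2 * ∑ x : V, Stmt16.P G t a x * Stmt16.P G (ℓ - t) x b := by linarith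
  constructor
  · have : (0 : ℝ) ≤ (N ^ 6)⁻¹ := by positivity
    rw [hNdef] at this
    calc _ ≤ 2 / δ := hmain
      _ ≤ 2 / (d - d') + ((Fintype.card V : ℝ) ^ 6)⁻¹ := by rw [← hδdef]; linarith
  · refine hmain.trans ?_
    rw [div_le_div_iff₀ hδ hd]
    nlinarith
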